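/- Let R be a commutative ring, r₁ r₂ : R, and p ≥ 1. Let x : (Fin p → ℕ) → R be a multiple Fibonacci sequence of type (r₁ + r₂, −r₁·r₂), i.e. for every coordinate i : Fin p and every multi-index A : Fin p → ℕ one has x(A[i ↦ A i + 2]) = (r₁ + r₂)·x(A[i ↦ A i + 1]) − r₁·r₂·x(A), where A[i ↦ v] denotes the function A updated at i to the value v. Define S₀(n) = r₁^n·r₂ − r₁·r₂^n and S₁(n) = r₂^n − r₁^n for n : ℕ. Then for every A : Fin p → ℕ, (r₂ − r₁)^p · x(A) = ∑ over all J : Fin p → Fin 2 of (∏ i, S_{J i}(A i)) · x(J), where in x(J) the function J is viewed as taking values 0 and 1 in ℕ. -/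

import Mathlib

private lemma fib_one_dim {R : Type*} [CommRing R] (r₁ r₂ : R) (y : ℕ → R)
    (hy : ∀ n, y (n + 2) = (r₁ + r₂) * y (n + 1) - r₁ * r₂ * y n) :
    ∀ n, (r₂ - r₁) * y n =
      (r₁ ^ n * r₂ - r₁ * r₂ ^ n) * y 0 + (r₂ ^ n - r₁ ^ n) * y 1 := by
  intro n
  induction n using Nat.strong_induction_on with
  | _ n ih =>
    match n with
    | 0 => ring
    | 1 => ring
    | (n + 2) =>
      have h0 := ih n (by omega)
      have h1 := ih (n + 1) (by omega)
      rw [hy n]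
      linear_combination (r₁ + r₂) * h1 - r₁ * r₂ * h0

theorem multiple_fibonacci_general_term {R : Type*} [CommRing R]
    (r₁ r₂ : R) (p : ℕ) (hp : 1 ≤ p)
    (x : (Fin p → ℕ) → R)
    (hx : ∀ (i : Fin p) (A : Fin p → ℕ),
      x (Function.update A i (A i + 2)) =
        (r₁ + r₂) * x (Function.update A i (A i + 1)) - r₁ * r₂ * x A)
    (S : Fin 2 → ℕ → R)
    (hS0 : ∀ n : ℕ, S 0 n = r₁ ^ n * r₂ - r₁ * r₂ ^ n)
    (hS1 : ∀ n : ℕ, S 1 n = r₂ ^ n - r₁ ^ n) :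
    ∀ A : Fin p → ℕ,
      (r₂ - r₁) ^ p * x A =
        ∑ J : Fin p → Fin 2, (∏ i, S (J i) (A i)) * x (fun i => (J i : ℕ)) := by
  -- one-dimensional step at any coordinate, for any base multi-index
  have key : ∀ (a : Fin p) (B : Fin p → ℕ),
      (r₂ - r₁) * x B =
        S 0 (B a) * x (Function.update B a 0) + S 1 (B a) * x (Function.update B a 1) := by
    intro a B
    have hy : ∀ n, x (Function.update B a (n + 2)) =
        (r₁ + r₂) * x (Function.update B a (n + 1)) - r₁ * r₂ * x (Function.update B a n) := by
      intro n
      have := hx a (Function.update B a n)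
      simpa [Function.update_idem] using this
    have h := fib_one_dim r₁ r₂ (fun n => x (Function.update B a n)) hy (B a)
    simpa [Function.update_eq_self, hS0, hS1] using h
  suffices h : ∀ (s : Finset (Fin p)) (A : Fin p → ℕ),
      (r₂ - r₁) ^ s.card * x A =
        ∑ J ∈ Finset.univ.filter (fun J : Fin p → Fin 2 => ∀ i ∉ s, J i = 0),
          (∏ i ∈ s, S (J i) (A i)) * x (fun i => if i ∈ s then (J i : ℕ) else A i) by
    intro A
    have h2 := h Finset.univ A
    simpa using h2
  intro s
  induction s using Finset.induction_on with
  | empty =>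
    intro A
    have hfe : (Finset.univ.filter
        (fun J : Fin p → Fin 2 => ∀ i ∉ (∅ : Finset (Fin p)), J i = 0)) = {fun _ => 0} := by
      ext J
      simp [funext_iff]
    rw [Finset.card_empty, pow_zero, one_mul, hfe]
    simp
  | @insert a s ha ih =>
    intro A
    have hcard : (insert a s).card = s.card + 1 := Finset.card_insert_of_notMem ha
    -- split the sum over supports in `insert a s`
    have hsplit : ∀ f : (Fin p → Fin 2) → R,
        ∑ J ∈ Finset.univ.filter (fun J : Fin p → Fin 2 => ∀ i ∉ insert a s, J i = 0), f J =
        ∑ J ∈ Finset.univ.filter (fun J : Fin p → Fin 2 => ∀ i ∉ s, J i = 0),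
          ∑ j : Fin 2, f (Function.update J a j) := by
      intro f
      rw [← Finset.sum_product']
      refine Finset.sum_nbij' (i := fun J' => (Function.update J' a 0, J' a))
        (j := fun q => Function.update q.1 a q.2) ?_ ?_ ?_ ?_ ?_
      · intro J' hJ'
        simp only [Finset.mem_filter, Finset.mem_univ, true_and] at hJ' ⊢
        refine Finset.mem_product.2 ⟨?_, Finset.mem_univ _⟩
        simp only [Finset.mem_filter, Finset.mem_univ, true_and]
        intro i hi
        rcases eq_or_ne i a with rfl | hia
        · simp
        · rw [Function.update_of_ne hia]
          exact hJ' i (by simp [hi, hia])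
      · intro q hq
        rw [Finset.mem_product] at hq
        obtain ⟨hq1, -⟩ := hq
        simp only [Finset.mem_filter, Finset.mem_univ, true_and] at hq1 ⊢
        intro i hi
        have hia : i ≠ a := fun h => hi (h ▸ Finset.mem_insert_self a s)
        rw [Function.update_of_ne hia]
        exact hq1 i (fun h => hi (Finset.mem_insert_of_mem h))
      · intro J' hJ'
        simp [Function.update_idem, Function.update_eq_self]
      · intro q hq
        rw [Finset.mem_product] at hq
        obtain ⟨hq1, -⟩ := hq
        simp only [Finset.mem_filter, Finset.mem_univ, true_and] at hq1
        have hqa : q.1 a = 0 := hq1 a ha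
        ext <;> simp [Function.update_idem, ← hqa, Function.update_eq_self]
      · intro J' hJ'
        simp [Function.update_idem, Function.update_eq_self]
    rw [hsplit]
    rw [hcard, pow_succ, mul_comm ((r₂ - r₁) ^ s.card) (r₂ - r₁), mul_assoc, ih A,
      Finset.mul_sum]
    refine Finset.sum_congr rfl ?_
    intro J hJ
    simp only [Finset.mem_filter, Finset.mem_univ, true_and] at hJ
    set B : Fin p → ℕ := fun i => if i ∈ s then (J i : ℕ) else A i with hBdef
    have hBa : B a = A a := by simp [hBdef, ha]
    have hkey := key a B
    rw [hBa] at hkey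
    have harg : ∀ j : Fin 2,
        (fun i => if i ∈ insert a s then ((Function.update J a j i : Fin 2) : ℕ) else A i)
          = Function.update B a (j : ℕ) := by
      intro j
      funext i
      rcases eq_or_ne i a with rfl | hia
      · simp
      · rw [Function.update_of_ne hia, Function.update_of_ne hia]
        by_cases his : i ∈ s
        · simp [his, hBdef]
        · simp [his, hia, hBdef]
    have hprod : ∀ j : Fin 2,
        (∏ i ∈ insert a s, S (Function.update J a j i) (A i))
          = S j (A a) * ∏ i ∈ s, S (J i) (A i) := by
      intro j
      rw [Finset.prod_insert ha, Function.update_self]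
      congr 1
      refine Finset.prod_congr rfl ?_
      intro i his
      have hia : i ≠ a := by rintro rfl; exact ha his
      rw [Function.update_of_ne hia]
    rw [Fin.sum_univ_two, hprod 0, hprod 1, harg 0, harg 1]
    rw [show ((0 : Fin 2) : ℕ) = 0 from rfl, show ((1 : Fin 2) : ℕ) = 1 from rfl]
    linear_combination (∏ i ∈ s, S (J i) (A i)) * hkey
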